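/- arXiv:2004.04563 — 2 statements merged into one kernel-verified Lean document; each statement's English description precedes it below -/
import Mathlib

section
/- Let W be a symmetric positive definite n×n matrix, Z an n×m matrix, and V an n×(n+m) matrix. Then the (n+m)×(n+m) block matrix [[W, Z],[Z^T, Z^T W⁻¹ Z]] satisfies [[W, Z],[Z^T, Z^T W⁻¹ Z]] ⪰ [W; Z^T] V + V^T [W; Z^T]^T - V^T W V, where [W; Z^T] denotes the (n+m)×n matrix obtained by stacking W on top of Z^T. -/
open Matrix

theorem affine_lower_bound (n m : ℕ)
    (W : Matrix (Fin n) (Fin n) ℝ) (hW : W.PosDef)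
    (Z : Matrix (Fin n) (Fin m) ℝ)
    (V : Matrix (Fin n) (Fin n ⊕ Fin m) ℝ) :
    (Matrix.fromBlocks W Z Zᵀ (Zᵀ * W⁻¹ * Z)
      - ((Matrix.fromRows W Zᵀ) * V + Vᵀ * (Matrix.fromRows W Zᵀ)ᵀ - Vᵀ * W * V)).PosSemidef := by
  set A := Matrix.fromRows W Zᵀ with hA
  have hWsymm : Wᵀ = W := hW.isHermitian.eq
  have hdet : IsUnit W.det := isUnit_iff_ne_zero.mpr (ne_of_gt hW.det_pos)
  have hWiW : W⁻¹ * W = 1 := Matrix.nonsing_inv_mul W hdet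
  have hWWi : W * W⁻¹ = 1 := Matrix.mul_nonsing_inv W hdet
  have hWit : (W⁻¹)ᵀ = W⁻¹ := by
    rw [Matrix.transpose_nonsing_inv, hWsymm]
  have hcl1 : ∀ (C : Matrix (Fin n) (Fin n ⊕ Fin m) ℝ), W * (W⁻¹ * C) = C :=
    fun C => Matrix.mul_nonsing_inv_cancel_left W C hdet
  have hcl2 : ∀ (C : Matrix (Fin n) (Fin n ⊕ Fin m) ℝ), W⁻¹ * (W * C) = C :=
    fun C => Matrix.nonsing_inv_mul_cancel_left W C hdet
  have hcl3 : ∀ (C : Matrix (Fin n) (Fin m) ℝ), W * (W⁻¹ * C) = C :=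
    fun C => Matrix.mul_nonsing_inv_cancel_left W C hdet
  set B := A * W⁻¹ - Vᵀ with hB
  have hAWA : A * (W⁻¹ * Aᵀ) = Matrix.fromBlocks W Z Zᵀ (Zᵀ * (W⁻¹ * Z)) := by
    rw [hA, Matrix.transpose_fromRows, Matrix.transpose_transpose]
    ext i j
    cases i <;> cases j <;>
      simp [Matrix.fromRows_mul, Matrix.mul_fromCols, Matrix.fromBlocks,
        ← Matrix.mul_assoc, hWWi, Matrix.mul_assoc, hWiW, hWsymm, hcl1, hcl3]
  have hBH : Bᴴ = W⁻¹ * Aᵀ - V := by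
    rw [hB]
    ext i j
    simp [Matrix.conjTranspose, Matrix.transpose_sub, Matrix.transpose_mul, hWit]
  have key : Matrix.fromBlocks W Z Zᵀ (Zᵀ * W⁻¹ * Z)
      - (A * V + Vᵀ * Aᵀ - Vᵀ * W * V) = B * W * Bᴴ := by
    rw [hBH, hB]
    simp only [Matrix.sub_mul, Matrix.mul_sub, Matrix.mul_assoc, hcl1, hcl2, hAWA]
    abel
  rw [key]
  exact hW.posSemidef.mul_mul_conjTranspose_same B
end

section
/- Suppose symmetric positive definite matrices D̄_T, D_s, D₀ and ε > 0 satisfy the block positive definiteness condition [[ε D₀ - (1+ε) D_s, ε D₀],[ε D₀, D̄_T + ε D₀]] ≻ 0. If Δ₀^T Δ₀ ⪯ D₀⁻¹ and Δᵤ^T Δᵤ ⪯ D̄_T⁻¹, then Δ_s := -(Δ₀ + Δᵤ) satisfies Δ_s^T Δ_s ≺ D_s⁻¹. -/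
open Matrix


variable {n : Type*} [Fintype n] [DecidableEq n]

lemma myHerm_smul {M : Matrix n n ℝ} (h : M.IsHermitian) (c : ℝ) :
    (c • M).IsHermitian := by
  unfold Matrix.IsHermitian at *
  ext i j
  simp only [conjTranspose_apply, Matrix.smul_apply, star_trivial, smul_eq_mul]
  congr 1
  conv_rhs => rw [← h]
  simp [conjTranspose_apply]

lemma myPosDef_smul {M : Matrix n n ℝ} (hM : M.PosDef) {c : ℝ} (hc : 0 < c) :
    (c • M).PosDef := by
  refine PosDef.of_dotProduct_mulVec_pos (myHerm_smul hM.1 c) (fun x hx => ?_)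
  have := hM.dotProduct_mulVec_pos hx
  simp only [smul_mulVec, dotProduct_smul, smul_eq_mul]
  positivity

lemma myPosSemidef_smul {M : Matrix n n ℝ} (hM : M.PosSemidef) {c : ℝ} (hc : 0 ≤ c) :
    (c • M).PosSemidef := by
  refine PosSemidef.of_dotProduct_mulVec_nonneg (myHerm_smul hM.1 c) (fun x => ?_)
  have := hM.dotProduct_mulVec_nonneg x
  simp only [smul_mulVec, dotProduct_smul, smul_eq_mul]
  positivity

lemma myPosDef_conj {M : Matrix n n ℝ} (hM : M.PosDef) {B : Matrix n n ℝ}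
    (hB : IsUnit B.det) : (Bᵀ * M * B).PosDef := by
  have hBH : Bᴴ = Bᵀ := conjTranspose_eq_transpose_of_trivial B
  refine PosDef.of_dotProduct_mulVec_pos (by rw [← hBH]; exact isHermitian_conjTranspose_mul_mul B hM.1) (fun x hx => ?_)
  have hinv : Invertible B := B.invertibleOfIsUnitDet hB
  have hx' : B *ᵥ x ≠ 0 := fun h => hx <| by
    have := B.mulVec_injective_of_invertible (a₁ := x) (a₂ := 0)
    simpa [mulVec_zero] using this (by simpa using h)
  have := hM.dotProduct_mulVec_pos hx'
  calc (0:ℝ) < dotProduct (star (B *ᵥ x)) (M *ᵥ (B *ᵥ x)) := this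
  _ = dotProduct (star x) ((Bᵀ * M * B) *ᵥ x) := by
      rw [star_trivial, star_trivial, ← mulVec_mulVec, ← mulVec_mulVec,
        dotProduct_mulVec x, vecMul_transpose, dotProduct_mulVec (B *ᵥ x)]

lemma myInv_sub_inv_posDef {A B : Matrix n n ℝ} (hA : A.PosDef) (hB : B.PosDef)
    (hBA : (B - A).PosDef) : (A⁻¹ - B⁻¹).PosDef := by
  have hAd : IsUnit A.det := hA.det_pos.ne'.isUnit
  have hBd : IsUnit B.det := hB.det_pos.ne'.isUnit
  set E := B - A with hE
  have hBinvsym : B⁻¹ᵀ = B⁻¹ := by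
    rw [← conjTranspose_eq_transpose_of_trivial]; exact hB.inv.1
  have hEsym : Eᵀ = E := by
    rw [← conjTranspose_eq_transpose_of_trivial]; exact hBA.1
  have key : A⁻¹ - B⁻¹ = (E * B⁻¹)ᵀ * A⁻¹ * (E * B⁻¹) + B⁻¹ᵀ * E * B⁻¹ := by
    have h1 : (E * B⁻¹)ᵀ * A⁻¹ * (E * B⁻¹) + B⁻¹ᵀ * E * B⁻¹
        = B⁻¹ * ((B - A) * (A⁻¹ * B)) * B⁻¹ := by
      rw [transpose_mul, hBinvsym, hEsym]
      have h2 : A⁻¹ * (E + A) = A⁻¹ * B := by rw [hE, sub_add_cancel]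
      calc B⁻¹ * E * A⁻¹ * (E * B⁻¹) + B⁻¹ * E * B⁻¹
          = B⁻¹ * (E * (A⁻¹ * (E + A))) * B⁻¹ := by
            rw [Matrix.mul_add, Matrix.nonsing_inv_mul A hAd, Matrix.mul_add E,
              Matrix.mul_one]
            noncomm_ring
        _ = B⁻¹ * ((B - A) * (A⁻¹ * B)) * B⁻¹ := by rw [h2, hE]
    rw [h1]
    rw [Matrix.sub_mul]
    have h3 : A * (A⁻¹ * B) = B := by
      rw [← Matrix.mul_assoc, Matrix.mul_nonsing_inv A hAd, Matrix.one_mul]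
    rw [h3, Matrix.mul_sub, Matrix.sub_mul]
    have h4 : B⁻¹ * (B * (A⁻¹ * B)) = A⁻¹ * B := by
      rw [← Matrix.mul_assoc, Matrix.nonsing_inv_mul B hBd, Matrix.one_mul]
    rw [h4, Matrix.nonsing_inv_mul B hBd, Matrix.mul_assoc,
      Matrix.mul_nonsing_inv B hBd, Matrix.mul_one, Matrix.one_mul]
  rw [key]
  have t1 : ((E * B⁻¹)ᵀ * A⁻¹ * (E * B⁻¹)).PosSemidef := by
    rw [← conjTranspose_eq_transpose_of_trivial]
    exact hA.inv.posSemidef.conjTranspose_mul_mul_same (E * B⁻¹)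
  have t2 : (B⁻¹ᵀ * E * B⁻¹).PosDef :=
    myPosDef_conj hBA (hB.inv.det_pos.ne'.isUnit)
  exact Matrix.PosDef.posSemidef_add t1 t2

lemma mySchur₂₂ {A B D : Matrix n n ℝ} (hBsym : Bᴴ = B) (hD : D.PosDef)
    (h : (Matrix.fromBlocks A B B D).PosDef) : (A - B * D⁻¹ * B).PosDef := by
  haveI : Invertible D := D.invertibleOfIsUnitDet hD.det_pos.ne'.isUnit
  have h' : (Matrix.fromBlocks A B Bᴴ D).PosDef := by rw [hBsym]; exact h
  rw [posDef_iff_dotProduct_mulVec]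
  constructor
  · have := (Matrix.IsHermitian.fromBlocks₂₂ A B hD.1).mp h'.1
    rw [hBsym] at this
    exact this
  · intro x hx
    have hxe : (x ⊕ᵥ (-((D⁻¹ * Bᴴ) *ᵥ x))) ≠ 0 := by
      intro hc
      apply hx
      ext i
      have := congrFun hc (Sum.inl i)
      simpa using this
    have := h'.dotProduct_mulVec_pos hxe
    rw [dotProduct_mulVec] at this
    rw [Matrix.schur_complement_eq₂₂ A B _ _ hD.1] at this
    rw [add_neg_cancel] at this
    simp only [star_zero, Matrix.zero_vecMul, zero_dotProduct, zero_add] at this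
    rw [hBsym] at this
    rw [dotProduct_mulVec]
    exact this

lemma myWoodbury {A B : Matrix n n ℝ} (hA : A.PosDef) (hB : B.PosDef) :
    (A⁻¹ + B⁻¹)⁻¹ = A - A * (A + B)⁻¹ * A := by
  have hAd : IsUnit A.det := hA.det_pos.ne'.isUnit
  have hBd : IsUnit B.det := hB.det_pos.ne'.isUnit
  have hABd : IsUnit (A + B).det := (hA.add hB).det_pos.ne'.isUnit
  apply Matrix.inv_eq_left_inv
  have e1 : A * (A + B)⁻¹ * (A + B) = A := by
    rw [Matrix.mul_assoc, Matrix.nonsing_inv_mul _ hABd, Matrix.mul_one]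
  have hS : A - A * (A + B)⁻¹ * A = A * (A + B)⁻¹ * B := by
    nth_rewrite 1 [← e1]
    rw [Matrix.mul_add, add_sub_cancel_left]
  calc (A - A * (A + B)⁻¹ * A) * (A⁻¹ + B⁻¹)
      = A * (A + B)⁻¹ * (B * A⁻¹ + B * B⁻¹) := by
        rw [hS, Matrix.mul_assoc (A * (A + B)⁻¹), Matrix.mul_add]
    _ = A * (A + B)⁻¹ * ((B + A) * A⁻¹) := by
        rw [Matrix.mul_nonsing_inv B hBd, Matrix.add_mul, Matrix.mul_nonsing_inv A hAd]
    _ = A * ((A + B)⁻¹ * (A + B)) * A⁻¹ := by rw [add_comm B A]; noncomm_ring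
    _ = 1 := by
        rw [Matrix.nonsing_inv_mul _ hABd, Matrix.mul_one, Matrix.mul_nonsing_inv A hAd]

theorem core_part_II (p q : ℕ)
    (D₀ DTbar Ds : Matrix (Fin q) (Fin q) ℝ)
    (hD₀ : D₀.PosDef) (hDTbar : DTbar.PosDef) (hDs : Ds.PosDef)
    (ε : ℝ) (hε : 0 < ε)
    (hblock : (Matrix.fromBlocks (ε • D₀ - (1 + ε) • Ds) (ε • D₀)
                (ε • D₀) (DTbar + ε • D₀)).PosDef)
    (Δ₀ Δu : Matrix (Fin p) (Fin q) ℝ)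
    (h₀ : (D₀⁻¹ - Δ₀ᵀ * Δ₀).PosSemidef)
    (hu : (DTbar⁻¹ - Δuᵀ * Δu).PosSemidef) :
    (Ds⁻¹ - (-(Δ₀ + Δu))ᵀ * (-(Δ₀ + Δu))).PosDef := by
  have hε1 : (0:ℝ) < 1 + ε := by linarith
  have hεD₀ : (ε • D₀).PosDef := myPosDef_smul hD₀ hε
  have hTpd : (DTbar + ε • D₀).PosDef := hDTbar.add hεD₀
  have hBsym : (ε • D₀)ᴴ = ε • D₀ := by
    rw [conjTranspose_smul, star_trivial, hD₀.1]
  have hSchur := mySchur₂₂ hBsym hTpd hblock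
  have hgap : ((ε • D₀ - (ε • D₀) * (DTbar + ε • D₀)⁻¹ * (ε • D₀)) - (1 + ε) • Ds).PosDef := by
    have heq : (ε • D₀ - (ε • D₀) * (DTbar + ε • D₀)⁻¹ * (ε • D₀)) - (1 + ε) • Ds
        = (ε • D₀ - (1 + ε) • Ds) - (ε • D₀) * (DTbar + ε • D₀)⁻¹ * (ε • D₀) := by
      abel
    rw [heq]; exact hSchur
  have hW : ((ε • D₀)⁻¹ + DTbar⁻¹)⁻¹
      = ε • D₀ - (ε • D₀) * (DTbar + ε • D₀)⁻¹ * (ε • D₀) := by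
    rw [myWoodbury hεD₀ hDTbar, add_comm (ε • D₀) DTbar]
  set N := (ε • D₀)⁻¹ + DTbar⁻¹ with hN
  have hNpd : N.PosDef := hεD₀.inv.add hDTbar.inv
  have hgap' : (N⁻¹ - (1 + ε) • Ds).PosDef := by rw [hW]; exact hgap
  have hC : ((1 + ε) • Ds).PosDef := myPosDef_smul hDs hε1
  have hmono := myInv_sub_inv_posDef hC hNpd.inv hgap'
  rw [Matrix.nonsing_inv_nonsing_inv N hNpd.det_pos.ne'.isUnit] at hmono
  haveI i1 : Invertible (1 + ε) := invertibleOfNonzero hε1.ne'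
  haveI i2 : Invertible ε := invertibleOfNonzero hε.ne'
  have hsm1 : ((1 + ε) • Ds)⁻¹ = (1 + ε)⁻¹ • Ds⁻¹ := by
    rw [Matrix.inv_smul Ds (1 + ε) hDs.det_pos.ne'.isUnit, invOf_eq_inv]
  have hsm2 : (ε • D₀)⁻¹ = ε⁻¹ • D₀⁻¹ := by
    rw [Matrix.inv_smul D₀ ε hD₀.det_pos.ne'.isUnit, invOf_eq_inv]
  rw [hsm1] at hmono
  have hP : ((1 + ε) • ((1 + ε)⁻¹ • Ds⁻¹ - N)).PosDef := myPosDef_smul hmono hε1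
  have h0' : ((1 + 1/ε) • (D₀⁻¹ - Δ₀ᵀ * Δ₀)).PosSemidef :=
    myPosSemidef_smul h₀ (by positivity)
  have hu' : ((1 + ε) • (DTbar⁻¹ - Δuᵀ * Δu)).PosSemidef :=
    myPosSemidef_smul hu hε1.le
  have hy : (ε⁻¹ • ((Δ₀ - ε • Δu)ᵀ * (Δ₀ - ε • Δu))).PosSemidef := by
    refine myPosSemidef_smul ?_ (by positivity)
    have := Matrix.posSemidef_conjTranspose_mul_self (Δ₀ - ε • Δu)
    rwa [conjTranspose_eq_transpose_of_trivial] at this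
  have hsum : Ds⁻¹ - (-(Δ₀ + Δu))ᵀ * (-(Δ₀ + Δu))
      = (1 + ε) • ((1 + ε)⁻¹ • Ds⁻¹ - N) + (1 + 1/ε) • (D₀⁻¹ - Δ₀ᵀ * Δ₀)
        + (1 + ε) • (DTbar⁻¹ - Δuᵀ * Δu)
        + ε⁻¹ • ((Δ₀ - ε • Δu)ᵀ * (Δ₀ - ε • Δu)) := by
    rw [hN, hsm2]
    simp only [transpose_neg, transpose_add, transpose_sub, transpose_smul,
      Matrix.neg_mul, Matrix.mul_neg, neg_neg, Matrix.add_mul, Matrix.mul_add,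
      Matrix.sub_mul, Matrix.mul_sub, Matrix.smul_mul, Matrix.mul_smul,
      smul_sub, smul_add, smul_smul]
    match_scalars <;> field_simp <;> ring
  rw [hsum]
  exact ((hP.add_posSemidef h0').add_posSemidef hu').add_posSemidef hy
end
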